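/- Let α: ℝ³ → M₄(ℝ) be given by α(x₁,x₂,x₃) = the matrix with rows (0,x₁,0,0), (x₁,0,0,0), (x₂,−x₂,−x₁,0), (x₃,x₃,−x₁,x₁), and let κ(x,y) = 2(x₁y₂−x₂y₁)E₄₂. Define S⁰ = {v ∈ ℝ⁴ : κ(x,y)v = 0 for all x,y} and inductively Sᵏ = {v ∈ Sᵏ⁻¹ : α(x)v ∈ Sᵏ⁻¹ for all x}. Then S⁰ = {(v₁,0,v₃,v₄)}, and S¹ = Sᵏ = {(0,0,v₃,v₄) : v₃,v₄ ∈ ℝ} for all k ≥ 1. -/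

import Mathlib

open Matrix

noncomputable section

/-- The extension α of the invariant projective structure on the Heisenberg group. -/
def αH (x : Fin 3 → ℝ) : Matrix (Fin 4) (Fin 4) ℝ :=
  !![0, x 0, 0, 0;
     x 0, 0, 0, 0;
     x 1, -(x 1), -(x 0), 0;
     x 2, x 2, -(x 0), x 0]

/-- Its curvature κ(x,y) = 2(x₁y₂ − x₂y₁)E₄₂. -/
def κH (x y : Fin 3 → ℝ) : Matrix (Fin 4) (Fin 4) ℝ :=
  (2 * (x 0 * y 1 - x 1 * y 0)) • Matrix.single (3 : Fin 4) (1 : Fin 4) (1 : ℝ)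

/-- The sets S⁰ ⊇ S¹ ⊇ S² ⊇ ⋯ computing the solution space. -/
def S14 : ℕ → Set (Fin 4 → ℝ)
  | 0 => {v | ∀ x y : Fin 3 → ℝ, (κH x y).mulVec v = 0}
  | (k + 1) => {v | v ∈ S14 k ∧ ∀ x : Fin 3 → ℝ, (αH x).mulVec v ∈ S14 k}

lemma mem_S14_succ (k : ℕ) (v : Fin 4 → ℝ) :
    v ∈ S14 (k + 1) ↔ v ∈ S14 k ∧ ∀ x : Fin 3 → ℝ, (αH x).mulVec v ∈ S14 k :=
  Iff.rfl

lemma αH_mulVec (x : Fin 3 → ℝ) (v : Fin 4 → ℝ) :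
    (αH x).mulVec v = ![x 0 * v 1, x 0 * v 0,
      x 1 * v 0 - x 1 * v 1 - x 0 * v 2,
      x 2 * v 0 + x 2 * v 1 - x 0 * v 2 + x 0 * v 3] := by
  funext i
  fin_cases i <;>
    simp [αH, Matrix.mulVec, Fin.sum_univ_four, dotProduct] <;> ring

lemma S0_eq : S14 0 = {v | v 1 = 0} := by
  ext v
  constructor
  · intro h
    have := congrFun (h ![1,0,0] ![0,1,0]) 3
    simpa [κH, Matrix.mulVec, Matrix.single, Fin.sum_univ_four,
      dotProduct] using this
  · intro h x y
    funext i
    fin_cases i <;>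
      simp_all [κH, Matrix.mulVec, Matrix.single, Fin.sum_univ_four,
        dotProduct]

lemma S1_eq : S14 1 = {v | v 0 = 0 ∧ v 1 = 0} := by
  ext v
  rw [mem_S14_succ, S0_eq]
  simp only [Set.mem_setOf_eq]
  constructor
  · rintro ⟨h1, h2⟩
    refine ⟨?_, h1⟩
    have := h2 ![1,0,0]
    simpa [αH_mulVec] using this
  · rintro ⟨h0, h1⟩
    refine ⟨h1, fun x => ?_⟩
    simp [αH_mulVec, h0]

lemma S_succ_eq (n : ℕ) (hn : S14 n = S14 1) : S14 (n + 1) = S14 1 := by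
  ext v
  rw [mem_S14_succ, hn, S1_eq]
  simp only [Set.mem_setOf_eq]
  constructor
  · rintro ⟨h, _⟩; exact h
  · rintro ⟨h0, h1⟩
    refine ⟨⟨h0, h1⟩, fun x => ?_⟩
    constructor <;> simp [αH_mulVec, h0, h1]

theorem stmt14 :
    S14 0 = {v | v 1 = 0} ∧
    S14 1 = {v | v 0 = 0 ∧ v 1 = 0} ∧
    (∀ k : ℕ, 1 ≤ k → S14 k = S14 1) := by
  refine ⟨S0_eq, S1_eq, ?_⟩
  intro k hk
  induction k with
  | zero => omega
  | succ n ih =>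
    rcases Nat.eq_zero_or_pos n with h | h
    · subst h; rfl
    · exact S_succ_eq n (ih h)
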